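/- Let (X,R) and (Y,R') be dualisable q-Hecke Yang-Baxter operators with braided traces tr(R) := ev∘Rᵉ∘coev and tr(R') defined analogously. Then the braided trace of the glueing satisfies tr(R ⊕_q R') = tr(R) + tr(R') − (q−q⁻¹)·tr(R)·tr(R'). -/

import Mathlib

set_option maxHeartbeats 1000000
set_option synthInstance.maxHeartbeats 200000
set_option linter.unusedSectionVars false
set_option linter.unusedVariables false


open TensorProduct LinearMap

noncomputable section

variable (k : Type*) [Field k]

/-- The quantum Yang-Baxter (braid) relation for an operator on `V ⊗ V`. -/
def Braid {V : Type*} [AddCommGroup V] [Module k V]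
    (Q : V ⊗[k] V →ₗ[k] V ⊗[k] V) : Prop :=
  Q.rTensor V ∘ₗ
      ((TensorProduct.assoc k V V V).symm.toLinearMap ∘ₗ Q.lTensor V ∘ₗ
        (TensorProduct.assoc k V V V).toLinearMap) ∘ₗ
      Q.rTensor V =
    ((TensorProduct.assoc k V V V).symm.toLinearMap ∘ₗ Q.lTensor V ∘ₗ
        (TensorProduct.assoc k V V V).toLinearMap) ∘ₗ
      Q.rTensor V ∘ₗ
      ((TensorProduct.assoc k V V V).symm.toLinearMap ∘ₗ Q.lTensor V ∘ₗ
        (TensorProduct.assoc k V V V).toLinearMap)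

variable (V : Type*) [AddCommGroup V] [Module k V] [FiniteDimensional k V]

/-- The partial (generalized) adjoint `R̃ : V*⊗V → V⊗V*` of an operator
`R : V⊗V → V⊗V`, formed with the evaluation and coevaluation:
`R̃ = (ev⊗id⊗id)(id⊗R⊗id)(id⊗id⊗coev)`. -/
def tilde (f : V ⊗[k] V →ₗ[k] V ⊗[k] V) :
    Module.Dual k V ⊗[k] V →ₗ[k] V ⊗[k] Module.Dual k V :=
  (TensorProduct.lid k (V ⊗[k] Module.Dual k V)).toLinearMap ∘ₗ
    LinearMap.rTensor (V ⊗[k] Module.Dual k V) (contractLeft k V) ∘ₗ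
    (TensorProduct.assoc k (Module.Dual k V) V (V ⊗[k] Module.Dual k V)).symm.toLinearMap ∘ₗ
    LinearMap.lTensor (Module.Dual k V) (TensorProduct.assoc k V V (Module.Dual k V)).toLinearMap ∘ₗ
    LinearMap.lTensor (Module.Dual k V) (LinearMap.rTensor (Module.Dual k V) f) ∘ₗ
    LinearMap.lTensor (Module.Dual k V)
      (TensorProduct.assoc k V V (Module.Dual k V)).symm.toLinearMap ∘ₗ
    (TensorProduct.assoc k (Module.Dual k V) V (V ⊗[k] Module.Dual k V)).toLinearMap ∘ₗ
    LinearMap.lTensor (Module.Dual k V ⊗[k] V) (coevaluation k V) ∘ₗ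
    (TensorProduct.rid k (Module.Dual k V ⊗[k] V)).symm.toLinearMap

/-- The braided (categorical) trace `tr(R) = ev ∘ Rᵉ ∘ coev ∈ k`, computed from
a two-sided inverse `B = (R̃)⁻¹ : V⊗V* → V*⊗V` of the partial adjoint of `R`
(this inverse is `Rᵉ|_{V⊗V*}`). -/
def btrace (B : V ⊗[k] Module.Dual k V →ₗ[k] Module.Dual k V ⊗[k] V) : k :=
  contractLeft k V (B (coevaluation k V 1))

end

noncomputable section Aux

variable {k : Type*} [Field k]

/-- `φ` applied on the first tensor factor. -/
def phiMap {V : Type*} [AddCommGroup V] [Module k V] (φ : Module.Dual k V) :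
    V ⊗[k] V →ₗ[k] V :=
  (TensorProduct.lid k V).toLinearMap ∘ₗ LinearMap.rTensor V φ

@[simp] lemma phiMap_tmul {V : Type*} [AddCommGroup V] [Module k V] (φ : Module.Dual k V)
    (a b : V) : phiMap φ (a ⊗ₜ[k] b) = φ a • b := rfl

lemma tilde_tmul {V : Type*} [AddCommGroup V] [Module k V] [FiniteDimensional k V]
    (f : V ⊗[k] V →ₗ[k] V ⊗[k] V) (φ : Module.Dual k V) (v : V) :
    tilde k V f (φ ⊗ₜ v) =
      ∑ i : Module.Basis.ofVectorSpaceIndex k V,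
        phiMap φ (f (v ⊗ₜ Module.Basis.ofVectorSpace k V i)) ⊗ₜ[k]
          (Module.Basis.ofVectorSpace k V).coord i := by
  have key : ∀ (F : V ⊗[k] V) (ψ : Module.Dual k V),
      (TensorProduct.lid k (V ⊗[k] Module.Dual k V))
        ((LinearMap.rTensor (V ⊗[k] Module.Dual k V) (contractLeft k V))
          ((TensorProduct.assoc k (Module.Dual k V) V (V ⊗[k] Module.Dual k V)).symm
            (φ ⊗ₜ ((TensorProduct.assoc k V V (Module.Dual k V)) (F ⊗ₜ ψ))))) =
      (phiMap φ F) ⊗ₜ[k] ψ := by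
    intro F ψ
    induction F using TensorProduct.induction_on with
    | zero => simp
    | tmul a b =>
      simp only [TensorProduct.assoc_tmul, TensorProduct.assoc_symm_tmul, rTensor_tmul,
        contractLeft_apply, TensorProduct.lid_tmul, phiMap_tmul, TensorProduct.smul_tmul']
    | add x y hx hy =>
      simp only [add_tmul, tmul_add, LinearEquiv.map_add, LinearMap.map_add, hx, hy]
  simp only [tilde, coe_comp, Function.comp_apply, LinearEquiv.coe_coe,
    TensorProduct.rid_symm_apply, lTensor_tmul, coevaluation_apply_one,
    tmul_sum, map_sum, TensorProduct.assoc_tmul, rTensor_tmul]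
  exact Finset.sum_congr rfl fun i _ => key _ _

end Aux

section Hom

variable {k : Type*} [Field k]

noncomputable def homOf (W Z : Type*) [AddCommGroup W] [Module k W] [AddCommGroup Z] [Module k Z] :
    Z ⊗[k] Module.Dual k W →ₗ[k] (W →ₗ[k] Z) :=
  dualTensorHom k W Z ∘ₗ (TensorProduct.comm k Z (Module.Dual k W)).toLinearMap

@[simp] lemma homOf_tmul_apply {W Z : Type*} [AddCommGroup W] [Module k W]
    [AddCommGroup Z] [Module k Z] (z : Z) (φ : Module.Dual k W) (w : W) :
    homOf W Z (z ⊗ₜ[k] φ) w = φ w • z := rfl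

lemma homOf_injective (W Z : Type*) [AddCommGroup W] [Module k W] [FiniteDimensional k W]
    [AddCommGroup Z] [Module k Z] :
    Function.Injective (homOf (k := k) W Z) := by
  have key : ∀ x : Module.Dual k W ⊗[k] Z,
      dualTensorHom k W Z x = dualTensorHomEquiv k W Z x :=
    fun x => by classical exact (dualTensorHomEquivOfBasis_apply (Module.Free.chooseBasis k W) x).symm
  intro a b hab
  have h2 : (dualTensorHomEquiv k W Z) ((TensorProduct.comm k Z (Module.Dual k W)) a) =
      (dualTensorHomEquiv k W Z) ((TensorProduct.comm k Z (Module.Dual k W)) b) := by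
    rw [← key, ← key]; exact hab
  exact (TensorProduct.comm k Z (Module.Dual k W)).injective
    ((dualTensorHomEquiv k W Z).injective h2)

lemma lemB {W V Z : Type*} [AddCommGroup W] [Module k W] [FiniteDimensional k W]
    [AddCommGroup V] [Module k V] [FiniteDimensional k V]
    [AddCommGroup Z] [Module k Z] (p : W →ₗ[k] V) (G : V →ₗ[k] Z) :
    ∑ i : Module.Basis.ofVectorSpaceIndex k W,
      G (p (Module.Basis.ofVectorSpace k W i)) ⊗ₜ[k] ((Module.Basis.ofVectorSpace k W).coord i) =
    TensorProduct.map G p.dualMap (coevaluation k V 1) := by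
  apply homOf_injective W Z
  ext w
  rw [coevaluation_apply_one]
  simp only [map_sum, TensorProduct.map_tmul, LinearMap.sum_apply, homOf_tmul_apply,
    dualMap_apply, Module.Basis.coord_apply]
  simp_rw [← map_smul G, ← map_smul p, ← map_sum, Module.Basis.sum_repr]

end Hom

section Glue

variable {k : Type*} [Field k] {X Y : Type*}
  [AddCommGroup X] [Module k X] [FiniteDimensional k X]
  [AddCommGroup Y] [Module k Y] [FiniteDimensional k Y]

lemma phiMap_inl (φ : Module.Dual k X) (t : X ⊗[k] X) :
    phiMap ((LinearMap.fst k X Y).dualMap φ)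
      (TensorProduct.map (LinearMap.inl k X Y) (LinearMap.inl k X Y) t) =
    LinearMap.inl k X Y (phiMap φ t) := by
  have : phiMap ((LinearMap.fst k X Y).dualMap φ) ∘ₗ
      TensorProduct.map (LinearMap.inl k X Y) (LinearMap.inl k X Y) =
      LinearMap.inl k X Y ∘ₗ phiMap (k := k) φ := by
    apply TensorProduct.ext'
    intro a b
    simp
  exact congrFun (congrArg (fun f => f.toFun) this) t

lemma phiMap_inr (ψ : Module.Dual k Y) (t : Y ⊗[k] Y) :
    phiMap ((LinearMap.snd k X Y).dualMap ψ)
      (TensorProduct.map (LinearMap.inr k X Y) (LinearMap.inr k X Y) t) =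
    LinearMap.inr k X Y (phiMap ψ t) := by
  have : phiMap ((LinearMap.snd k X Y).dualMap ψ) ∘ₗ
      TensorProduct.map (LinearMap.inr k X Y) (LinearMap.inr k X Y) =
      LinearMap.inr k X Y ∘ₗ phiMap (k := k) ψ := by
    apply TensorProduct.ext'
    intro a b
    simp
  exact congrFun (congrArg (fun f => f.toFun) this) t

end Glue

section Claims

variable {k : Type*} [Field k] {X Y : Type*}
  [AddCommGroup X] [Module k X] [FiniteDimensional k X]
  [AddCommGroup Y] [Module k Y] [FiniteDimensional k Y]

lemma claim1 (R : X ⊗[k] X →ₗ[k] X ⊗[k] X)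
    (Q : (X × Y) ⊗[k] (X × Y) →ₗ[k] (X × Y) ⊗[k] (X × Y))
    (hXX : Q ∘ₗ TensorProduct.map (LinearMap.inl k X Y) (LinearMap.inl k X Y) =
      TensorProduct.map (LinearMap.inl k X Y) (LinearMap.inl k X Y) ∘ₗ R)
    (hXY : ∀ (x : X) (y : Y),
      Q ((x, (0 : Y)) ⊗ₜ[k] ((0 : X), y)) = ((0 : X), y) ⊗ₜ[k] (x, (0 : Y))) :
    tilde k (X × Y) Q ∘ₗ
      TensorProduct.map (LinearMap.fst k X Y).dualMap (LinearMap.inl k X Y) =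
    TensorProduct.map (LinearMap.inl k X Y) (LinearMap.fst k X Y).dualMap ∘ₗ tilde k X R := by
  have hXXapp : ∀ (v x : X), Q ((v, (0 : Y)) ⊗ₜ[k] (x, (0 : Y))) =
      TensorProduct.map (LinearMap.inl k X Y) (LinearMap.inl k X Y) (R (v ⊗ₜ[k] x)) := by
    intro v x
    have := congrFun (congrArg (fun f => f.toFun) hXX) (v ⊗ₜ[k] x)
    simpa using this
  apply TensorProduct.ext'
  intro φ v
  simp only [coe_comp, Function.comp_apply, TensorProduct.map_tmul]
  rw [tilde_tmul, tilde_tmul]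
  have step : ∀ i : Module.Basis.ofVectorSpaceIndex k (X × Y),
      phiMap ((LinearMap.fst k X Y).dualMap φ)
          (Q ((LinearMap.inl k X Y v) ⊗ₜ[k] Module.Basis.ofVectorSpace k (X × Y) i)) ⊗ₜ[k]
          (Module.Basis.ofVectorSpace k (X × Y)).coord i =
      ((LinearMap.inl k X Y ∘ₗ phiMap φ ∘ₗ R ∘ₗ TensorProduct.mk k X X v)
          ((LinearMap.fst k X Y) (Module.Basis.ofVectorSpace k (X × Y) i))) ⊗ₜ[k]
          (Module.Basis.ofVectorSpace k (X × Y)).coord i := by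
    intro i
    set b := Module.Basis.ofVectorSpace k (X × Y) i with hb
    have hsplit : b = (b.1, (0 : Y)) + ((0 : X), b.2) := by ext <;> simp
    congr 1
    rw [hsplit]
    simp only [inl_apply, tmul_add, map_add, hXXapp, hXY, phiMap_inl]
    have h0 : phiMap ((LinearMap.fst k X Y).dualMap φ)
        ((((0 : X), b.2) : X × Y) ⊗ₜ[k] ((v, (0 : Y)) : X × Y)) = 0 := by
      simp
    rw [h0, add_zero]
    simp
  rw [Finset.sum_congr rfl (fun i _ => step i)]
  rw [lemB (LinearMap.fst k X Y)
    (LinearMap.inl k X Y ∘ₗ phiMap φ ∘ₗ R ∘ₗ TensorProduct.mk k X X v)]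
  rw [coevaluation_apply_one]
  simp only [map_sum, TensorProduct.map_tmul, coe_comp, Function.comp_apply,
    TensorProduct.mk_apply]

lemma claim2 (q : k) (R' : Y ⊗[k] Y →ₗ[k] Y ⊗[k] Y)
    (Q : (X × Y) ⊗[k] (X × Y) →ₗ[k] (X × Y) ⊗[k] (X × Y))
    (hYY : Q ∘ₗ TensorProduct.map (LinearMap.inr k X Y) (LinearMap.inr k X Y) =
      TensorProduct.map (LinearMap.inr k X Y) (LinearMap.inr k X Y) ∘ₗ R')
    (hYX : ∀ (y : Y) (x : X),
      Q (((0 : X), y) ⊗ₜ[k] (x, (0 : Y))) =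
        (x, (0 : Y)) ⊗ₜ[k] ((0 : X), y) +
          (q - q⁻¹) • (((0 : X), y) ⊗ₜ[k] (x, (0 : Y))))
    (ψ : Module.Dual k Y) (w : Y) :
    tilde k (X × Y) Q
      (((LinearMap.snd k X Y).dualMap ψ) ⊗ₜ[k] (LinearMap.inr k X Y w)) =
    TensorProduct.map (LinearMap.inr k X Y) (LinearMap.snd k X Y).dualMap
        (tilde k Y R' (ψ ⊗ₜ[k] w)) +
      ((q - q⁻¹) * ψ w) •
        TensorProduct.map (LinearMap.inl k X Y) (LinearMap.fst k X Y).dualMap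
          (coevaluation k X 1) := by
  have hYYapp : ∀ (v x : Y), Q ((((0 : X), v) : X × Y) ⊗ₜ[k] (((0 : X), x) : X × Y)) =
      TensorProduct.map (LinearMap.inr k X Y) (LinearMap.inr k X Y) (R' (v ⊗ₜ[k] x)) := by
    intro v x
    have := congrFun (congrArg (fun f => f.toFun) hYY) (v ⊗ₜ[k] x)
    simpa using this
  rw [tilde_tmul, tilde_tmul]
  have step : ∀ i : Module.Basis.ofVectorSpaceIndex k (X × Y),
      phiMap ((LinearMap.snd k X Y).dualMap ψ)
          (Q ((LinearMap.inr k X Y w) ⊗ₜ[k] Module.Basis.ofVectorSpace k (X × Y) i)) ⊗ₜ[k]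
          (Module.Basis.ofVectorSpace k (X × Y)).coord i =
      ((q - q⁻¹) * ψ w) •
        (((LinearMap.inl k X Y)
            ((LinearMap.fst k X Y) (Module.Basis.ofVectorSpace k (X × Y) i))) ⊗ₜ[k]
          (Module.Basis.ofVectorSpace k (X × Y)).coord i) +
      ((LinearMap.inr k X Y ∘ₗ phiMap ψ ∘ₗ R' ∘ₗ TensorProduct.mk k Y Y w)
          ((LinearMap.snd k X Y) (Module.Basis.ofVectorSpace k (X × Y) i))) ⊗ₜ[k]
          (Module.Basis.ofVectorSpace k (X × Y)).coord i := by
    intro i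
    set b := Module.Basis.ofVectorSpace k (X × Y) i with hb
    have hsplit : b = (b.1, (0 : Y)) + ((0 : X), b.2) := by ext <;> simp
    rw [TensorProduct.smul_tmul', ← TensorProduct.add_tmul]
    congr 1
    conv_lhs => rw [hsplit]
    simp only [inl_apply, inr_apply, tmul_add, map_add, hYYapp, hYX, phiMap_inr]
    simp only [LinearMap.map_smul, phiMap_tmul, dualMap_apply, snd_apply, fst_apply,
      map_zero, zero_smul, zero_add, smul_smul, coe_comp, Function.comp_apply,
      TensorProduct.mk_apply, inr_apply]
  rw [Finset.sum_congr rfl (fun i _ => step i), Finset.sum_add_distrib, ← Finset.smul_sum]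
  rw [lemB (LinearMap.fst k X Y) (LinearMap.inl k X Y),
    lemB (LinearMap.snd k X Y)
      (LinearMap.inr k X Y ∘ₗ phiMap ψ ∘ₗ R' ∘ₗ TensorProduct.mk k Y Y w)]
  rw [add_comm]
  congr 1
  rw [coevaluation_apply_one]
  simp only [map_sum, TensorProduct.map_tmul, coe_comp, Function.comp_apply,
    TensorProduct.mk_apply]

lemma claim2' (q : k) (R' : Y ⊗[k] Y →ₗ[k] Y ⊗[k] Y)
    (Q : (X × Y) ⊗[k] (X × Y) →ₗ[k] (X × Y) ⊗[k] (X × Y))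
    (hYY : Q ∘ₗ TensorProduct.map (LinearMap.inr k X Y) (LinearMap.inr k X Y) =
      TensorProduct.map (LinearMap.inr k X Y) (LinearMap.inr k X Y) ∘ₗ R')
    (hYX : ∀ (y : Y) (x : X),
      Q (((0 : X), y) ⊗ₜ[k] (x, (0 : Y))) =
        (x, (0 : Y)) ⊗ₜ[k] ((0 : X), y) +
          (q - q⁻¹) • (((0 : X), y) ⊗ₜ[k] (x, (0 : Y)))) :
    tilde k (X × Y) Q ∘ₗ
        TensorProduct.map (LinearMap.snd k X Y).dualMap (LinearMap.inr k X Y) =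
      TensorProduct.map (LinearMap.inr k X Y) (LinearMap.snd k X Y).dualMap ∘ₗ tilde k Y R' +
        (q - q⁻¹) • ((contractLeft k Y).smulRight
          (TensorProduct.map (LinearMap.inl k X Y) (LinearMap.fst k X Y).dualMap
            (coevaluation k X 1))) := by
  apply TensorProduct.ext'
  intro ψ w
  simp only [coe_comp, Function.comp_apply, TensorProduct.map_tmul, LinearMap.add_apply,
    LinearMap.smul_apply, LinearMap.smulRight_apply, contractLeft_apply]
  rw [claim2 q R' Q hYY hYX ψ w, smul_smul]

lemma claim3 :
    coevaluation k (X × Y) 1 =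
      TensorProduct.map (LinearMap.inl k X Y) (LinearMap.fst k X Y).dualMap
          (coevaluation k X 1) +
        TensorProduct.map (LinearMap.inr k X Y) (LinearMap.snd k X Y).dualMap
          (coevaluation k Y 1) := by
  apply homOf_injective (X × Y) (X × Y)
  refine LinearMap.ext fun w => ?_
  rw [coevaluation_apply_one, coevaluation_apply_one, coevaluation_apply_one]
  simp only [map_sum, map_add, TensorProduct.map_tmul, LinearMap.sum_apply,
    LinearMap.add_apply, homOf_tmul_apply, dualMap_apply, Module.Basis.coord_apply,
    fst_apply, snd_apply, inl_apply, inr_apply]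
  rw [(Module.Basis.ofVectorSpace k (X × Y)).sum_repr w]
  have hX : ∑ i : Module.Basis.ofVectorSpaceIndex k X,
      (Module.Basis.ofVectorSpace k X).repr w.1 i • ((Module.Basis.ofVectorSpace k X i, (0 : Y)) : X × Y) =
      ((w.1, (0 : Y)) : X × Y) := by
    have := congrArg (LinearMap.inl k X Y) ((Module.Basis.ofVectorSpace k X).sum_repr w.1)
    rw [map_sum] at this
    simpa using this
  have hY : ∑ i : Module.Basis.ofVectorSpaceIndex k Y,
      (Module.Basis.ofVectorSpace k Y).repr w.2 i • (((0 : X), Module.Basis.ofVectorSpace k Y i) : X × Y) =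
      (((0 : X), w.2) : X × Y) := by
    have := congrArg (LinearMap.inr k X Y) ((Module.Basis.ofVectorSpace k Y).sum_repr w.2)
    rw [map_sum] at this
    simpa using this
  rw [hX, hY]
  ext <;> simp

lemma claim4X :
    contractLeft k (X × Y) ∘ₗ
      TensorProduct.map (LinearMap.fst k X Y).dualMap (LinearMap.inl k X Y) =
    contractLeft k X := by
  apply TensorProduct.ext'
  intro φ x
  simp

lemma claim4Y :
    contractLeft k (X × Y) ∘ₗ
      TensorProduct.map (LinearMap.snd k X Y).dualMap (LinearMap.inr k X Y) =
    contractLeft k Y := by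
  apply TensorProduct.ext'
  intro ψ y
  simp

end Claims

/-- the braided trace of the glueing of two dualisable `q`-Hecke
Yang-Baxter operators satisfies
`tr(R ⊕_q R') = tr(R) + tr(R') − (q−q⁻¹)·tr(R)·tr(R')`. -/
theorem stmt18 {k : Type*} [Field k] {X Y : Type*}
    [AddCommGroup X] [Module k X] [FiniteDimensional k X]
    [AddCommGroup Y] [Module k Y] [FiniteDimensional k Y]
    (q : k) (hq : q ≠ 0)
    (R : X ⊗[k] X →ₗ[k] X ⊗[k] X) (R' : Y ⊗[k] Y →ₗ[k] Y ⊗[k] Y)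
    (hRbij : Function.Bijective R) (hR'bij : Function.Bijective R')
    (hRbraid : Braid k R) (hR'braid : Braid k R')
    (hRHecke : (R - q • LinearMap.id) ∘ₗ (R + q⁻¹ • LinearMap.id) = 0)
    (hR'Hecke : (R' - q • LinearMap.id) ∘ₗ (R' + q⁻¹ • LinearMap.id) = 0)
    -- dualisability of `R` and `R'`
    (Rinv : X ⊗[k] X →ₗ[k] X ⊗[k] X)
    (hRinv : R ∘ₗ Rinv = LinearMap.id ∧ Rinv ∘ₗ R = LinearMap.id)
    (R'inv : Y ⊗[k] Y →ₗ[k] Y ⊗[k] Y)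
    (hR'inv : R' ∘ₗ R'inv = LinearMap.id ∧ R'inv ∘ₗ R' = LinearMap.id)
    (BX : X ⊗[k] Module.Dual k X →ₗ[k] Module.Dual k X ⊗[k] X)
    (hBX : tilde k X R ∘ₗ BX = LinearMap.id ∧ BX ∘ₗ tilde k X R = LinearMap.id)
    (BY : Y ⊗[k] Module.Dual k Y →ₗ[k] Module.Dual k Y ⊗[k] Y)
    (hBY : tilde k Y R' ∘ₗ BY = LinearMap.id ∧ BY ∘ₗ tilde k Y R' = LinearMap.id)
    (hRinvt : Function.Bijective (tilde k X Rinv))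
    (hR'invt : Function.Bijective (tilde k Y R'inv))
    -- the glueing `Q = R ⊕_q R'`
    (Q : (X × Y) ⊗[k] (X × Y) →ₗ[k] (X × Y) ⊗[k] (X × Y))
    (hXX : Q ∘ₗ TensorProduct.map (LinearMap.inl k X Y) (LinearMap.inl k X Y) =
      TensorProduct.map (LinearMap.inl k X Y) (LinearMap.inl k X Y) ∘ₗ R)
    (hYY : Q ∘ₗ TensorProduct.map (LinearMap.inr k X Y) (LinearMap.inr k X Y) =
      TensorProduct.map (LinearMap.inr k X Y) (LinearMap.inr k X Y) ∘ₗ R')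
    (hXY : ∀ (x : X) (y : Y),
      Q ((x, (0 : Y)) ⊗ₜ[k] ((0 : X), y)) = ((0 : X), y) ⊗ₜ[k] (x, (0 : Y)))
    (hYX : ∀ (y : Y) (x : X),
      Q (((0 : X), y) ⊗ₜ[k] (x, (0 : Y))) =
        (x, (0 : Y)) ⊗ₜ[k] ((0 : X), y) +
          (q - q⁻¹) • (((0 : X), y) ⊗ₜ[k] (x, (0 : Y))))
    (BQ : (X × Y) ⊗[k] Module.Dual k (X × Y) →ₗ[k] Module.Dual k (X × Y) ⊗[k] (X × Y))
    (hBQ : tilde k (X × Y) Q ∘ₗ BQ = LinearMap.id ∧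
      BQ ∘ₗ tilde k (X × Y) Q = LinearMap.id) :
    btrace k (X × Y) BQ =
      btrace k X BX + btrace k Y BY - (q - q⁻¹) * (btrace k X BX * btrace k Y BY) := by
    classical
  set cX := BX (coevaluation k X 1) with hcXdef
  set cY := BY (coevaluation k Y 1) with hcYdef
  have hcX : tilde k X R cX = coevaluation k X 1 := by
    have := LinearMap.congr_fun hBX.1 (coevaluation k X 1)
    simpa using this
  have hcY : tilde k Y R' cY = coevaluation k Y 1 := by
    have := LinearMap.congr_fun hBY.1 (coevaluation k Y 1)
    simpa using this
  set c0 := TensorProduct.map (LinearMap.inl k X Y) (LinearMap.fst k X Y).dualMap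
    (coevaluation k X 1) with hc0
  set u := TensorProduct.map (LinearMap.fst k X Y).dualMap (LinearMap.inl k X Y) cX +
      TensorProduct.map (LinearMap.snd k X Y).dualMap (LinearMap.inr k X Y) cY -
      ((q - q⁻¹) * contractLeft k Y cY) •
        TensorProduct.map (LinearMap.fst k X Y).dualMap (LinearMap.inl k X Y) cX with hudef
  have h1 : tilde k (X × Y) Q
      (TensorProduct.map (LinearMap.fst k X Y).dualMap (LinearMap.inl k X Y) cX) = c0 := by
    have := LinearMap.congr_fun (claim1 R Q hXX hXY) cX
    simp only [coe_comp, Function.comp_apply] at this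
    rw [this, hcX]
  have h2 : tilde k (X × Y) Q
      (TensorProduct.map (LinearMap.snd k X Y).dualMap (LinearMap.inr k X Y) cY) =
      TensorProduct.map (LinearMap.inr k X Y) (LinearMap.snd k X Y).dualMap
        (coevaluation k Y 1) + ((q - q⁻¹) * contractLeft k Y cY) • c0 := by
    have := LinearMap.congr_fun (claim2' q R' Q hYY hYX) cY
    simp only [coe_comp, Function.comp_apply, LinearMap.add_apply, LinearMap.smul_apply,
      LinearMap.smulRight_apply] at this
    rw [this, hcY, smul_smul]
  have hu : tilde k (X × Y) Q u = coevaluation k (X × Y) 1 := by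
    rw [hudef, map_sub, map_add, LinearMap.map_smul, h1, h2, claim3 (k := k) (X := X) (Y := Y)]
    abel
  have hBQu : BQ (coevaluation k (X × Y) 1) = u := by
    rw [← hu]
    have := LinearMap.congr_fun hBQ.2 u
    simpa using this
  have h4X := LinearMap.congr_fun (claim4X (k := k) (X := X) (Y := Y)) cX
  have h4Y := LinearMap.congr_fun (claim4Y (k := k) (X := X) (Y := Y)) cY
  simp only [coe_comp, Function.comp_apply] at h4X h4Y
  rw [btrace, hBQu, hudef, map_sub, map_add, LinearMap.map_smul, h4X, h4Y]
  rw [btrace, btrace, ← hcXdef, ← hcYdef]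
  simp only [smul_eq_mul]
  ring
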